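/- Let σ : ℝ → ℝ be a polynomial of degree d. Then every function of the form x ↦ W₂(σ∘W₁(x)), where W₁ : ℝ → ℝᵐ and W₂ : ℝᵐ → ℝ are affine maps and σ is applied componentwise, is a polynomial of degree at most d. Consequently, single-hidden-layer networks with polynomial activation σ cannot uniformly approximate the function x ↦ |x| on [−1,1] to arbitrary accuracy. -/

import Mathlib

open Finset Polynomial

lemma aux_poly (d : ℕ) (P : Polynomial ℝ) (hP : P.natDegree ≤ d)
    (m : ℕ) (a b c : Fin m → ℝ) (c₀ : ℝ) :
    ∃ Q : Polynomial ℝ, Q.natDegree ≤ d ∧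
      ∀ x : ℝ, c₀ + ∑ j, c j * P.eval (a j * x + b j) = Q.eval x := by
  refine ⟨C c₀ + ∑ j, C (c j) * P.comp (C (a j) * X + C (b j)), ?_, ?_⟩
  · apply le_trans (Polynomial.natDegree_add_le _ _)
    simp only [natDegree_C, max_le_iff]
    constructor
    · exact d.zero_le
    · apply Polynomial.natDegree_sum_le_of_forall_le
      intro j _
      apply le_trans (Polynomial.natDegree_mul_le)
      simp only [natDegree_C, zero_add]
      apply le_trans (Polynomial.natDegree_comp_le)
      have h1 : (C (a j) * X + C (b j)).natDegree ≤ 1 := by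
        apply le_trans (Polynomial.natDegree_add_le _ _)
        simp [Polynomial.natDegree_C_mul_le, Polynomial.natDegree_X_le]
        exact le_trans (Polynomial.natDegree_C_mul_le _ _) Polynomial.natDegree_X_le
      calc P.natDegree * (C (a j) * X + C (b j)).natDegree ≤ d * 1 :=
            Nat.mul_le_mul hP h1
        _ = d := by ring
  · intro x
    simp [Polynomial.eval_finset_sum]

lemma aux_no_poly (d : ℕ)
    (h : ∀ ε > (0:ℝ), ∃ Q : Polynomial ℝ, Q.natDegree ≤ d ∧
        ∀ x ∈ Set.Icc (-1:ℝ) 1, abs (Q.eval x - abs x) < ε) : False := by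
  set I : Set ℝ := Set.Icc (-1 : ℝ) 1 with hI
  haveI : CompactSpace I := by rw [hI]; infer_instance
  let f : C(I, ℝ) := ⟨fun x => |x.1|, (continuous_abs.comp continuous_subtype_val)⟩
  let S : Submodule ℝ C(I, ℝ) :=
    (Polynomial.degreeLT ℝ (d+1)).map (Polynomial.toContinuousMapOnAlgHom I).toLinearMap
  haveI : FiniteDimensional ℝ (Polynomial.degreeLT ℝ (d+1)) :=
    LinearEquiv.finiteDimensional (Polynomial.degreeLTEquiv ℝ (d+1)).symm
  haveI : FiniteDimensional ℝ S := Module.Finite.map _ _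
  have hclosed : IsClosed (S : Set C(I, ℝ)) := Submodule.closed_of_finiteDimensional S
  have hfmem : f ∈ S := by
    rw [← SetLike.mem_coe, ← hclosed.closure_eq, Metric.mem_closure_iff]
    intro ε hε
    obtain ⟨Q, hQd, hQ⟩ := h (ε/2) (by linarith)
    refine ⟨Polynomial.toContinuousMapOn Q I, ⟨Q, ?_, rfl⟩, ?_⟩
    · rw [SetLike.mem_coe, Polynomial.mem_degreeLT]
      refine lt_of_le_of_lt Q.degree_le_natDegree ?_
      exact_mod_cast Nat.lt_succ_of_le hQd
    · have : dist f (Polynomial.toContinuousMapOn Q I) ≤ ε/2 := by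
        apply ContinuousMap.dist_le (by linarith) |>.2
        intro x
        have := hQ x.1 x.2
        rw [Real.dist_eq]
        simp only [f, ContinuousMap.coe_mk, Polynomial.toContinuousMapOn_apply,
          Polynomial.toContinuousMap_apply]
        rw [abs_sub_comm]
        exact le_of_lt this
      linarith
  obtain ⟨Q, _, hQf⟩ := hfmem
  have heval : ∀ x ∈ I, Q.eval x = |x| := by
    intro x hx
    have := congrArg (fun g : C(I,ℝ) => g ⟨x, hx⟩) hQf
    simpa [f] using this
  have h1 : Q = Polynomial.X := by
    apply Polynomial.eq_of_infinite_eval_eq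
    apply Set.Infinite.mono (s := Set.Icc (0:ℝ) 1)
    · intro x hx
      have hxI : x ∈ I := ⟨by linarith [hx.1], hx.2⟩
      simp only [Set.mem_setOf_eq, Polynomial.eval_X]
      rw [heval x hxI, abs_of_nonneg hx.1]
    · exact Set.Icc_infinite (by norm_num : (0:ℝ) < 1)
  have h2 : Q = -Polynomial.X := by
    apply Polynomial.eq_of_infinite_eval_eq
    apply Set.Infinite.mono (s := Set.Icc (-1:ℝ) 0)
    · intro x hx
      have hxI : x ∈ I := ⟨hx.1, by linarith [hx.2]⟩
      simp only [Set.mem_setOf_eq, Polynomial.eval_neg, Polynomial.eval_X]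
      rw [heval x hxI, abs_of_nonpos hx.2]
    · exact Set.Icc_infinite (by norm_num : (-1:ℝ) < 0)
  rw [h1] at h2
  have := congrArg (Polynomial.eval (1:ℝ)) h2
  simp at this
  norm_num at this

/-- With a polynomial activation of degree ≤ d, every single-hidden-layer
network is a polynomial of degree ≤ d; consequently such networks cannot
uniformly approximate |x| on [−1,1] to arbitrary accuracy. -/
theorem stmt_15 (d : ℕ) (P : Polynomial ℝ) (hP : P.natDegree ≤ d)
    (σ : ℝ → ℝ) (hσ : ∀ t, σ t = P.eval t) :
    (∀ (m : ℕ) (a b c : Fin m → ℝ) (c₀ : ℝ),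
      ∃ Q : Polynomial ℝ, Q.natDegree ≤ d ∧
        ∀ x : ℝ, c₀ + ∑ j, c j * σ (a j * x + b j) = Q.eval x) ∧
    ¬ (∀ ε > (0 : ℝ), ∃ (m : ℕ) (a b c : Fin m → ℝ) (c₀ : ℝ),
        ∀ x ∈ Set.Icc (-1 : ℝ) 1,
          abs ((c₀ + ∑ j, c j * σ (a j * x + b j)) - abs x) < ε) := by
  have key : ∀ (m : ℕ) (a b c : Fin m → ℝ) (c₀ : ℝ),
      ∃ Q : Polynomial ℝ, Q.natDegree ≤ d ∧
        ∀ x : ℝ, c₀ + ∑ j, c j * σ (a j * x + b j) = Q.eval x := by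
    intro m a b c c₀
    obtain ⟨Q, hQd, hQ⟩ := aux_poly d P hP m a b c c₀
    exact ⟨Q, hQd, fun x => by simp only [hσ]; exact hQ x⟩
  refine ⟨key, ?_⟩
  intro h
  apply aux_no_poly d
  intro ε hε
  obtain ⟨m, a, b, c, c₀, hnet⟩ := h ε hε
  obtain ⟨Q, hQd, hQ⟩ := key m a b c c₀
  refine ⟨Q, hQd, fun x hx => ?_⟩
  rw [← hQ x]
  exact hnet x hx
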